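/- Let A ∈ ℤ^{m×n} be an integer matrix with all entries of absolute value at most Δ, and let y ∈ ℤ^n be a nonzero cycle of A with ‖y‖₁ > (2mΔ + 1)^m. Then y can be written as the sum of two nonzero cycles of A, each of which is sign-compatible with y. -/

import Mathlib

open Finset


lemma purify {ι : Type*} [DecidableEq ι] (m : ℕ) (v : ι → Fin m → ℚ) (S : Finset ι) :
    ∀ (μ : ι → ℚ), (∀ t ∈ S, 0 ≤ μ t ∧ μ t ≤ 1) →
    ∃ μ' : ι → ℚ, (∀ t ∈ S, 0 ≤ μ' t ∧ μ' t ≤ 1) ∧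
      (∑ t ∈ S, μ' t) = (∑ t ∈ S, μ t) ∧
      (∀ i, ∑ t ∈ S, μ' t * v t i = ∑ t ∈ S, μ t * v t i) ∧
      (S.filter (fun t => 0 < μ' t ∧ μ' t < 1)).card ≤ m + 1 := by
  -- strong induction on the number of fractional coordinates
  suffices H : ∀ (c : ℕ) (μ : ι → ℚ), (∀ t ∈ S, 0 ≤ μ t ∧ μ t ≤ 1) →
      (S.filter (fun t => 0 < μ t ∧ μ t < 1)).card ≤ c →
      ∃ μ' : ι → ℚ, (∀ t ∈ S, 0 ≤ μ' t ∧ μ' t ≤ 1) ∧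
        (∑ t ∈ S, μ' t) = (∑ t ∈ S, μ t) ∧
        (∀ i, ∑ t ∈ S, μ' t * v t i = ∑ t ∈ S, μ t * v t i) ∧
        (S.filter (fun t => 0 < μ' t ∧ μ' t < 1)).card ≤ m + 1 by
    intro μ h01
    exact H _ μ h01 le_rfl
  intro c
  induction c with
  | zero =>
    intro μ h01 hc
    exact ⟨μ, h01, rfl, fun _ => rfl, le_trans (Nat.le_of_eq (Nat.le_zero.mp hc)) (Nat.le_add_left 0 (m+1)) |>.trans le_rfl⟩
  | succ c ih =>
    intro μ h01 hc
    by_cases hdone : (S.filter (fun t => 0 < μ t ∧ μ t < 1)).card ≤ m + 1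
    · exact ⟨μ, h01, rfl, fun _ => rfl, hdone⟩
    push_neg at hdone
    set F : Finset ι := S.filter (fun t => 0 < μ t ∧ μ t < 1) with hF
    have hFS : F ⊆ S := filter_subset _ _
    have hFcard : m + 1 < F.card := hdone
    -- find a nontrivial relation among the vectors (v t, 1), t ∈ F
    have hnli : ¬ LinearIndependent ℚ (fun t : F => ((v t : Fin m → ℚ), (1 : ℚ))) := by
      intro hli
      have := hli.fintype_card_le_finrank
      rw [Fintype.card_coe] at this
      have hrank : Module.finrank ℚ ((Fin m → ℚ) × ℚ) = m + 1 := by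
        simp [Module.finrank_prod, Module.finrank_pi]
      omega
    obtain ⟨g, hg0, tstar, hgstar⟩ := Fintype.not_linearIndependent_iff.mp hnli
    -- the direction w
    set w : ι → ℚ := fun t => if h : t ∈ F then g ⟨t, h⟩ else 0 with hw
    have hwF : ∀ t, t ∉ F → w t = 0 := fun t ht => by simp [hw, ht]
    have hwsum : ∑ t ∈ F, w t = 0 := by
      have h2 := congrArg Prod.snd hg0
      rw [Prod.snd_sum] at h2
      simp only [Prod.smul_def, smul_eq_mul, mul_one, Prod.snd_zero] at h2
      rw [← Finset.sum_attach F (fun t => w t)]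
      rw [← h2]
      refine Finset.sum_congr rfl (fun t _ => ?_)
      simp [hw, t.2]
    have hwv : ∀ i, ∑ t ∈ F, w t * v t i = 0 := by
      intro i
      have h1 := congrArg Prod.fst hg0
      rw [Prod.fst_sum] at h1
      have h1' := congrFun h1 i
      simp only [Prod.smul_def, Prod.fst_zero, Finset.sum_apply, Pi.smul_apply,
        smul_eq_mul, Pi.zero_apply] at h1'
      rw [← Finset.sum_attach F (fun t => w t * v t i)]
      rw [← h1']
      refine Finset.sum_congr rfl (fun t _ => ?_)
      simp [hw, t.2]
    -- the set of moving coordinates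
    have hD : (F.filter (fun t => w t ≠ 0)).Nonempty := by
      refine ⟨tstar, mem_filter.mpr ⟨tstar.2, ?_⟩⟩
      simpa [hw, tstar.2] using hgstar
    set D := F.filter (fun t => w t ≠ 0) with hDdef
    -- step sizes
    set δ : ι → ℚ := fun t => if 0 < w t then (1 - μ t) / w t else μ t / (-w t) with hδ
    obtain ⟨t0, ht0D, ht0min⟩ := Finset.exists_min_image D δ hD
    have hfrac : ∀ t ∈ F, 0 < μ t ∧ μ t < 1 := fun t ht => (mem_filter.mp ht).2
    have hδpos : ∀ t ∈ D, 0 < δ t := by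
      intro t ht
      obtain ⟨htF, htw⟩ := mem_filter.mp ht
      obtain ⟨h0, h1⟩ := hfrac t htF
      rcases lt_or_gt_of_ne htw with hneg | hpos
      · have : ¬ (0 < w t) := by linarith
        simp only [hδ, this, if_false]
        exact div_pos h0 (by linarith)
      · simp only [hδ, hpos, if_true]
        exact div_pos (by linarith) hpos
    set θ := δ t0 with hθ
    have hθpos : 0 < θ := hδpos t0 ht0D
    set μ' : ι → ℚ := fun t => μ t + θ * w t with hμ'
    -- moving keeps us in [0,1]
    have key : ∀ t ∈ S, (0 ≤ μ' t ∧ μ' t ≤ 1) ∧ (t ∉ F → μ' t = μ t) := by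
      intro t htS
      by_cases htD : t ∈ D
      · obtain ⟨htF, htw⟩ := mem_filter.mp htD
        obtain ⟨h0, h1⟩ := hfrac t htF
        have hmin := ht0min t htD
        constructor
        swap
        · intro h; exact absurd htF h
        rcases lt_or_gt_of_ne htw with hneg | hpos
        · have hδt : δ t = μ t / (-w t) := by
            have : ¬ (0 < w t) := by linarith
            simp [hδ, this]
          constructor
          · have : θ * (-w t) ≤ δ t * (-w t) :=
              mul_le_mul_of_nonneg_right hmin (by linarith)
            rw [hδt, div_mul_cancel₀ _ (by linarith : (-w t) ≠ 0)] at this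
            simp only [hμ']
            nlinarith
          · simp only [hμ']
            nlinarith
        · have hδt : δ t = (1 - μ t) / w t := by simp [hδ, hpos]
          constructor
          · simp only [hμ']; nlinarith
          · have : θ * w t ≤ δ t * w t := mul_le_mul_of_nonneg_right hmin (by linarith)
            rw [hδt, div_mul_cancel₀ _ (by linarith : w t ≠ 0)] at this
            simp only [hμ']
            linarith
      · have hwt : w t = 0 := by
          by_cases htF : t ∈ F
          · by_contra hne
            exact htD (mem_filter.mpr ⟨htF, hne⟩)
          · exact hwF t htF
        have : μ' t = μ t := by simp [hμ', hwt]
        rw [this]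
        exact ⟨h01 t htS, fun _ => rfl⟩
    -- t0 leaves the fractional set
    have ht0F : t0 ∈ F := (mem_filter.mp ht0D).1
    have ht0out : ¬ (0 < μ' t0 ∧ μ' t0 < 1) := by
      obtain ⟨ht0F', ht0w⟩ := mem_filter.mp ht0D
      rcases lt_or_gt_of_ne ht0w with hneg | hpos
      · have hδt : θ = μ t0 / (-w t0) := by
          have : ¬ (0 < w t0) := by linarith
          simp [hθ, hδ, this]
        have hwne : w t0 ≠ 0 := (mem_filter.mp ht0D).2
        have hmul : μ t0 / (-w t0) * w t0 = -μ t0 := by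
          have h : (-w t0) ≠ 0 := by simpa using hwne
          field_simp
        have : μ' t0 = 0 := by
          simp only [hμ', hδt]
          linarith [hmul]
        rw [this]; simp
      · have hδt : θ = (1 - μ t0) / w t0 := by simp [hθ, hδ, hpos]
        have hwne : w t0 ≠ 0 := (mem_filter.mp ht0D).2
        have hmul : (1 - μ t0) / w t0 * w t0 = 1 - μ t0 := by
          field_simp
        have : μ' t0 = 1 := by
          simp only [hμ', hδt]
          linarith [hmul]
        rw [this]; simp
    -- new fractional set is strictly smaller
    have hsubset : S.filter (fun t => 0 < μ' t ∧ μ' t < 1) ⊆ F.erase t0 := by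
      intro t ht
      obtain ⟨htS, htfrac⟩ := mem_filter.mp ht
      have htF : t ∈ F := by
        by_contra htF
        rw [(key t htS).2 htF] at htfrac
        exact htF (mem_filter.mpr ⟨htS, htfrac⟩)
      refine mem_erase.mpr ⟨?_, htF⟩
      rintro rfl
      exact ht0out htfrac
    have hcard' : (S.filter (fun t => 0 < μ' t ∧ μ' t < 1)).card ≤ c := by
      have h1 : (F.erase t0).card = F.card - 1 := card_erase_of_mem ht0F
      have h2 := card_le_card hsubset
      omega
    -- sums are preserved
    have hsum' : ∑ t ∈ S, μ' t = ∑ t ∈ S, μ t := by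
      simp only [hμ']
      rw [Finset.sum_add_distrib]
      have : ∑ t ∈ S, θ * w t = θ * ∑ t ∈ S, w t := by rw [Finset.mul_sum]
      rw [this]
      have : ∑ t ∈ S, w t = ∑ t ∈ F, w t := by
        refine (Finset.sum_subset hFS ?_).symm
        intro t _ htF
        exact hwF t htF
      rw [this, hwsum]
      ring
    have hsumv' : ∀ i, ∑ t ∈ S, μ' t * v t i = ∑ t ∈ S, μ t * v t i := by
      intro i
      simp only [hμ', add_mul]
      rw [Finset.sum_add_distrib]
      have : ∑ t ∈ S, θ * w t * v t i = θ * ∑ t ∈ S, w t * v t i := by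
        rw [Finset.mul_sum]
        exact Finset.sum_congr rfl fun t _ => by ring
      rw [this]
      have : ∑ t ∈ S, w t * v t i = ∑ t ∈ F, w t * v t i := by
        refine (Finset.sum_subset hFS ?_).symm
        intro t _ htF
        simp [hwF t htF]
      rw [this, hwv i]
      ring
    obtain ⟨μ'', h01'', hsum'', hsumv'', hcard''⟩ := ih μ' (fun t ht => (key t ht).1) hcard'
    exact ⟨μ'', h01'', by rw [hsum'', hsum'], fun i => by rw [hsumv'' i, hsumv' i], hcard''⟩
open Finset

lemma descend {ι : Type*} [DecidableEq ι] (m : ℕ) (v : ι → Fin m → ℚ)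
    (S : Finset ι) (lam : ι → ℚ)
    (hcard : m < S.card)
    (h01 : ∀ t ∈ S, 0 ≤ lam t ∧ lam t ≤ 1)
    (hsum : ∑ t ∈ S, lam t = (S.card : ℚ) - m)
    (hv : ∀ i, ∑ t ∈ S, lam t * v t i = 0) :
    ∃ t₀ ∈ S, ∃ lam' : ι → ℚ,
      (∀ t ∈ S.erase t₀, 0 ≤ lam' t ∧ lam' t ≤ 1) ∧
      (∑ t ∈ S.erase t₀, lam' t = ((S.erase t₀).card : ℚ) - m) ∧
      (∀ i, ∑ t ∈ S.erase t₀, lam' t * v t i = 0) := by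
  set k := S.card with hk
  have hkm : (1 : ℚ) ≤ (k : ℚ) - m := by
    have : (m : ℚ) + 1 ≤ k := by exact_mod_cast hcard
    linarith
  set c : ℚ := ((k : ℚ) - 1 - m) / ((k : ℚ) - m) with hc
  have hc0 : 0 ≤ c := by
    apply div_nonneg <;> linarith
  have hc1 : c ≤ 1 := by
    rw [hc, div_le_one (by linarith)]
    linarith
  set μ0 : ι → ℚ := fun t => c * lam t with hμ0
  have h01' : ∀ t ∈ S, 0 ≤ μ0 t ∧ μ0 t ≤ 1 := by
    intro t ht
    obtain ⟨ha, hb⟩ := h01 t ht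
    exact ⟨mul_nonneg hc0 ha, le_trans (mul_le_mul hc1 hb ha zero_le_one) (by norm_num)⟩
  have hsum0 : ∑ t ∈ S, μ0 t = (k : ℚ) - 1 - m := by
    simp only [hμ0]
    rw [← Finset.mul_sum, hsum, hc, div_mul_cancel₀ _ (by linarith : (k:ℚ) - m ≠ 0)]
  have hv0 : ∀ i, ∑ t ∈ S, μ0 t * v t i = 0 := by
    intro i
    simp only [hμ0, mul_assoc]
    rw [← Finset.mul_sum, hv i, mul_zero]
  obtain ⟨μ, hμ01, hμsum, hμv, hμfrac⟩ := purify m v S μ0 h01'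
  rw [hsum0] at hμsum
  -- find a zero coordinate
  have hzero : ∃ t₀ ∈ S, μ t₀ = 0 := by
    by_contra hno
    push_neg at hno
    set F := S.filter (fun t => 0 < μ t ∧ μ t < 1) with hFdef
    set O := S.filter (fun t => μ t = 1) with hOdef
    have hsplit : ∀ t ∈ S, t ∈ O ∨ t ∈ F := by
      intro t ht
      obtain ⟨h0, h1⟩ := hμ01 t ht
      rcases eq_or_lt_of_le h1 with he | hl
      · exact Or.inl (mem_filter.mpr ⟨ht, he⟩)
      · have : 0 < μ t := lt_of_le_of_ne h0 (Ne.symm (hno t ht))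
        exact Or.inr (mem_filter.mpr ⟨ht, this, hl⟩)
    have hdisj : Disjoint O F := by
      rw [Finset.disjoint_left]
      intro t htO htF
      have h1 := (mem_filter.mp htO).2
      have h2 := (mem_filter.mp htF).2.2
      rw [h1] at h2
      exact absurd h2 (lt_irrefl 1)
    have hunion : S = O ∪ F := by
      apply Finset.Subset.antisymm
      · intro t ht
        rcases hsplit t ht with h | h
        · exact Finset.mem_union_left _ h
        · exact Finset.mem_union_right _ h
      · intro t ht
        rcases Finset.mem_union.mp ht with h | h
        · exact Finset.mem_of_mem_filter t h
        · exact Finset.mem_of_mem_filter t h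
    have hcardsplit : k = O.card + F.card := by
      rw [hk, hunion, Finset.card_union_of_disjoint hdisj]
    have hsumsplit : ∑ t ∈ S, μ t = (O.card : ℚ) + ∑ t ∈ F, μ t := by
      rw [hunion, Finset.sum_union hdisj]
      congr 1
      rw [Finset.sum_congr rfl (fun t ht => (mem_filter.mp ht).2)]
      simp
      rfl
    have hFsum : ∑ t ∈ F, μ t = (F.card : ℚ) - 1 - m := by
      have : (O.card : ℚ) = (k : ℚ) - F.card := by
        have : (k : ℚ) = (O.card : ℚ) + F.card := by exact_mod_cast hcardsplit
        linarith
      rw [hμsum] at hsumsplit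
      rw [this] at hsumsplit
      linarith
    have hFpos : 0 ≤ ∑ t ∈ F, μ t :=
      Finset.sum_nonneg (fun t ht => le_of_lt (mem_filter.mp ht).2.1)
    rcases Finset.eq_empty_or_nonempty F with hFe | hFne
    · rw [hFe] at hFsum
      simp at hFsum
      have : (0:ℚ) < 1 + m := by positivity
      linarith
    · rename_i hFne
      have hstrict : 0 < ∑ t ∈ F, μ t :=
        Finset.sum_pos (fun t ht => (mem_filter.mp ht).2.1) hFne
      have hle : (F.card : ℚ) ≤ m + 1 := by exact_mod_cast hμfrac
      rw [hFsum] at hstrict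
      linarith
  obtain ⟨t₀, ht₀S, ht₀0⟩ := hzero
  refine ⟨t₀, ht₀S, μ, fun t ht => hμ01 t (Finset.mem_of_mem_erase ht), ?_, ?_⟩
  · rw [Finset.sum_erase _ (by rw [ht₀0])]
    rw [hμsum, Finset.card_erase_of_mem ht₀S]
    have : (1:ℕ) ≤ k := by omega
    rw [hk]
    rw [Nat.cast_sub (this : 1 ≤ S.card)]; push_cast
    ring
  · intro i
    rw [Finset.sum_erase _ (by rw [ht₀0]; ring)]
    rw [hμv i, hv0 i]

lemma subchain {ι : Type*} [DecidableEq ι] :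
    ∀ (N : ℕ) (S : Finset ι), S.card = N →
    ∃ C : ℕ → Finset ι, (∀ j, C j ⊆ C (j+1)) ∧ (∀ j, j ≤ S.card → (C j).card = j) ∧
      (∀ j, S.card ≤ j → C j = S) := by
  intro N
  induction N with
  | zero =>
    intro S hS
    refine ⟨fun _ => S, fun j => le_rfl, ?_, fun j _ => rfl⟩
    intro j hj
    rw [hS] at hj ⊢
    omega
  | succ N ih =>
    intro S hS
    have hne : S.Nonempty := by rw [← Finset.card_pos, hS]; omega
    obtain ⟨x, hx⟩ := hne
    set S' := S.erase x with hS'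
    have hcard' : S'.card = N := by rw [hS', Finset.card_erase_of_mem hx, hS]; omega
    obtain ⟨C', hmono', hcards', htop'⟩ := ih S' hcard'
    refine ⟨fun j => if j ≤ N then C' j else S, ?_, ?_, ?_⟩
    · intro j
      by_cases h1 : j + 1 ≤ N
      · simp only [if_pos (by omega : j ≤ N), if_pos h1]
        exact hmono' j
      · by_cases h2 : j ≤ N
        · simp only [if_pos h2, if_neg h1]
          have hjN : j = N := by omega
          rw [hjN, htop' N (by omega)]
          exact Finset.erase_subset x S
        · simp only [if_neg h1, if_neg h2]
          exact Finset.Subset.refl S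
    · intro j hj
      rw [hS] at hj
      by_cases h2 : j ≤ N
      · simp only [if_pos h2]
        exact hcards' j (by omega)
      · simp only [if_neg h2]
        rw [hS]
        omega
    · intro j hj
      rw [hS] at hj
      simp only [if_neg (by omega : ¬ j ≤ N)]

lemma chain_lemma {ι : Type*} [DecidableEq ι] (m : ℕ) (v : ι → Fin m → ℚ) (Δ : ℚ)
    (hΔ : 0 ≤ Δ) (hv : ∀ t i, |v t i| ≤ Δ) :
    ∀ (d : ℕ) (S : Finset ι) (lam : ι → ℚ),
      S.card = m + d →
      (∀ t ∈ S, 0 ≤ lam t ∧ lam t ≤ 1) →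
      (∑ t ∈ S, lam t = (S.card : ℚ) - m) →
      (∀ i, ∑ t ∈ S, lam t * v t i = 0) →
      ∃ C : ℕ → Finset ι, (∀ j, C j ⊆ C (j+1)) ∧ (∀ j, j ≤ m + d → (C j).card = j) ∧
        C (m+d) = S ∧ (∀ j, j ≤ m + d → ∀ i, |∑ t ∈ C j, v t i| ≤ m * Δ) := by
  have bound_top : ∀ (S : Finset ι) (lam : ι → ℚ),
      (∀ t ∈ S, 0 ≤ lam t ∧ lam t ≤ 1) →
      (∑ t ∈ S, lam t = (S.card : ℚ) - m) →
      (∀ i, ∑ t ∈ S, lam t * v t i = 0) →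
      ∀ i, |∑ t ∈ S, v t i| ≤ m * Δ := by
    intro S lam h01 hsum hv0 i
    have h1 : ∑ t ∈ S, v t i = ∑ t ∈ S, (1 - lam t) * v t i := by
      rw [Finset.sum_congr rfl (fun t _ => by ring :
        ∀ t ∈ S, (1 - lam t) * v t i = v t i - lam t * v t i)]
      rw [Finset.sum_sub_distrib, hv0 i, sub_zero]
    rw [h1]
    calc |∑ t ∈ S, (1 - lam t) * v t i| ≤ ∑ t ∈ S, |(1 - lam t) * v t i| :=
          Finset.abs_sum_le_sum_abs _ _
      _ ≤ ∑ t ∈ S, (1 - lam t) * Δ := by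
          refine Finset.sum_le_sum (fun t ht => ?_)
          rw [abs_mul]
          have h1t : 0 ≤ 1 - lam t := by linarith [(h01 t ht).2]
          rw [abs_of_nonneg h1t]
          exact mul_le_mul_of_nonneg_left (hv t i) h1t
      _ = m * Δ := by
          rw [← Finset.sum_mul, Finset.sum_sub_distrib, hsum]
          simp only [Finset.sum_const, nsmul_eq_mul, mul_one]
          ring
  intro d
  induction d with
  | zero =>
    intro S lam hcard h01 hsum hv0
    obtain ⟨C, hmono, hcards, htop⟩ := subchain (m + 0) S hcard
    refine ⟨C, hmono, fun j hj => hcards j (by omega), htop (m+0) (by omega), ?_⟩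
    intro j hj i
    by_cases hjm : j = m + 0
    · rw [hjm, htop (m+0) (by omega)]
      exact bound_top S lam h01 hsum hv0 i
    · calc |∑ t ∈ C j, v t i| ≤ ∑ t ∈ C j, |v t i| := Finset.abs_sum_le_sum_abs _ _
        _ ≤ ∑ t ∈ C j, Δ := Finset.sum_le_sum (fun t _ => hv t i)
        _ = (C j).card * Δ := by rw [Finset.sum_const, nsmul_eq_mul]
        _ ≤ m * Δ := by
            have : (C j).card = j := hcards j (by omega)
            rw [this]
            have : (j : ℚ) ≤ m := by
              have : j ≤ m := by omega
              exact_mod_cast this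
            exact mul_le_mul_of_nonneg_right this hΔ
  | succ d ih =>
    intro S lam hcard h01 hsum hv0
    have hmlt : m < S.card := by omega
    obtain ⟨t₀, ht₀S, lam', h01', hsum', hv0'⟩ := descend m v S lam hmlt h01 hsum hv0
    set S' := S.erase t₀ with hS'
    have hcard' : S'.card = m + d := by
      rw [hS', Finset.card_erase_of_mem ht₀S, hcard]; omega
    obtain ⟨C', hmono', hcards', htop', hbound'⟩ := ih S' lam' hcard' h01'
      (by rw [hcard'] at hsum' ⊢; exact hsum') hv0'
    refine ⟨fun j => if j ≤ m + d then C' j else S, ?_, ?_, ?_, ?_⟩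
    · intro j
      by_cases h1 : j + 1 ≤ m + d
      · simp only [if_pos (by omega : j ≤ m + d), if_pos h1]
        exact hmono' j
      · by_cases h2 : j ≤ m + d
        · simp only [if_pos h2, if_neg h1]
          have : j = m + d := by omega
          subst this
          rw [htop']
          exact Finset.erase_subset t₀ S
        · simp only [if_neg h1, if_neg h2]
          exact Finset.Subset.refl S
    · intro j hj
      by_cases h2 : j ≤ m + d
      · simp only [if_pos h2]
        exact hcards' j h2
      · simp only [if_neg h2]
        rw [hcard]
        omega
    · simp only [if_neg (by omega : ¬ m + (d+1) ≤ m + d)]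
    · intro j hj i
      by_cases h2 : j ≤ m + d
      · simp only [if_pos h2]
        exact hbound' j h2 i
      · simp only [if_neg h2]
        exact bound_top S lam h01 hsum hv0 i

lemma steinitz_chain {ι : Type*} [Fintype ι] [DecidableEq ι] (m : ℕ) (v : ι → Fin m → ℚ)
    (Δ : ℚ) (hΔ : 0 ≤ Δ) (hv : ∀ t i, |v t i| ≤ Δ)
    (hm : m ≤ Fintype.card ι) (hpos : 0 < Fintype.card ι)
    (hsum0 : ∀ i, ∑ t, v t i = 0) :
    ∃ C : ℕ → Finset ι, (∀ k l, k ≤ l → C k ⊆ C l) ∧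
      (∀ j, j ≤ Fintype.card ι → (C j).card = j) ∧
      (∀ j, j ≤ Fintype.card ι → ∀ i, |∑ t ∈ C j, v t i| ≤ m * Δ) := by
  set N := Fintype.card ι with hN
  set lam : ι → ℚ := fun _ => ((N : ℚ) - m) / N with hlam
  have hNpos : (0:ℚ) < N := by exact_mod_cast hpos
  have hmN : (m:ℚ) ≤ N := by exact_mod_cast hm
  have h01 : ∀ t ∈ (Finset.univ : Finset ι), 0 ≤ lam t ∧ lam t ≤ 1 := by
    intro t _
    constructor
    · apply div_nonneg (by linarith) (by linarith)
    · rw [div_le_one hNpos]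
      have : (0:ℚ) ≤ m := by positivity
      linarith
  have hcardu : (Finset.univ : Finset ι).card = m + (N - m) := by
    rw [Finset.card_univ, ← hN]
    omega
  have hsum : ∑ t ∈ (Finset.univ : Finset ι), lam t = ((Finset.univ : Finset ι).card : ℚ) - m := by
    rw [Finset.sum_const, Finset.card_univ, ← hN, nsmul_eq_mul]
    show (N : ℚ) * (((N : ℚ) - m) / N) = (N : ℚ) - m
    field_simp
  have hv0 : ∀ i, ∑ t ∈ (Finset.univ : Finset ι), lam t * v t i = 0 := by
    intro i
    rw [← Finset.mul_sum]
    rw [hsum0 i, mul_zero]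
  obtain ⟨C, hmono, hcards, htop, hbound⟩ :=
    chain_lemma m v Δ hΔ hv (N - m) Finset.univ lam hcardu h01 hsum hv0
  have hmd : m + (N - m) = N := by omega
  refine ⟨C, ?_, ?_, ?_⟩
  · intro k l hkl
    have : ∀ a b : ℕ, C a ⊆ C (a + b) := by
      intro a b
      induction b with
      | zero => exact Finset.Subset.refl _
      | succ b ihb => exact ihb.trans (hmono (a + b))
    have := this k (l - k)
    rwa [Nat.add_sub_cancel' hkl] at this
  · intro j hj
    exact hcards j (by omega)
  · intro j hj i
    exact hbound j (by omega) i

lemma exists_unit_decomp (n : ℕ) :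
    ∀ (N : ℕ) (y : Fin n → ℤ), (∑ i, (y i).natAbs) = N →
    ∃ f : Fin N → (Fin n → ℤ), (∑ t, f t) = y ∧
      ∀ t, ∃ j s, (s = 1 ∨ s = -1) ∧ 0 < s * y j ∧ f t = Pi.single j s := by
  intro N
  induction N with
  | zero =>
    intro y hy
    have hy0 : y = 0 := by
      funext i
      have : (y i).natAbs = 0 := by
        have := Finset.sum_eq_zero_iff.mp hy i (Finset.mem_univ i)
        exact this
      simp only [Pi.zero_apply]
      omega
    exact ⟨fun t => t.elim0, by simp [hy0], fun t => t.elim0⟩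
  | succ N ih =>
    intro y hy
    have hex : ∃ j, y j ≠ 0 := by
      by_contra h
      push_neg at h
      have : ∑ i, (y i).natAbs = 0 := by
        apply Finset.sum_eq_zero
        intro i _
        have := h i
        omega
      omega
    obtain ⟨j, hj⟩ := hex
    set s : ℤ := if 0 < y j then 1 else -1 with hs
    have hs1 : s = 1 ∨ s = -1 := by
      rw [hs]; split_ifs <;> simp
    have hsy : 0 < s * y j := by
      rw [hs]; split_ifs with h
      · omega
      · have : y j < 0 := by omega
        omega
    set y' : Fin n → ℤ := y - Pi.single j s with hy'
    have hy'j : y' j = y j - s := by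
      simp [hy']
    have hy'i : ∀ i, i ≠ j → y' i = y i := by
      intro i hi
      simp [hy', Pi.single_eq_of_ne hi]
    have hsum' : ∑ i, (y' i).natAbs = N := by
      rw [← Finset.add_sum_erase _ _ (Finset.mem_univ j)] at hy ⊢
      have h1 : ∑ i ∈ Finset.univ.erase j, (y' i).natAbs
          = ∑ i ∈ Finset.univ.erase j, (y i).natAbs := by
        refine Finset.sum_congr rfl (fun i hi => ?_)
        rw [hy'i i (Finset.ne_of_mem_erase hi)]
      rw [h1, hy'j]
      have h2 : (y j - s).natAbs = (y j).natAbs - 1 ∧ 1 ≤ (y j).natAbs := by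
        rcases hs1 with h | h <;> rw [h] at hsy ⊢ <;> constructor <;> omega
      omega
    obtain ⟨f', hf'sum, hf'⟩ := ih y' hsum'
    refine ⟨Fin.cons (Pi.single j s) f', ?_, ?_⟩
    · rw [Fin.sum_cons, hf'sum, hy']
      abel
    · intro t
      refine Fin.cases ?_ ?_ t
      · exact ⟨j, s, hs1, hsy, by simp⟩
      · intro t'
        obtain ⟨j', s', hs1', hsy', hft'⟩ := hf' t'
        refine ⟨j', s', hs1', ?_, by simpa using hft'⟩
        by_cases hjj : j' = j
        · subst hjj
          rw [hy'j] at hsy'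
          rcases hs1 with h | h <;> rcases hs1' with h' | h' <;>
            rw [h] at hsy <;> rw [h'] at hsy' ⊢ <;> omega
        · rwa [hy'i j' hjj] at hsy'

/-- Two integer vectors are sign-compatible if they agree in sign componentwise. -/
def SignCompat {ι : Type*} (u v : ι → ℤ) : Prop := ∀ i, 0 ≤ u i * v i

/-- A cycle of an integer matrix `A` is an integer vector in its kernel. -/
def IsCycle {R C : Type*} [Fintype C] (A : Matrix R C ℤ) (y : C → ℤ) : Prop :=
  A.mulVec y = 0

/-- A nonzero cycle `y` of `A ∈ ℤ^{m×n}`, with all entries of `A` of absolute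
value at most `Δ`, whose `ℓ₁`-norm exceeds `(2mΔ+1)^m` decomposes as the sum of
two nonzero cycles of `A`, each sign-compatible with `y`. -/
theorem long_cycle_decomposes (m n : ℕ) (A : Matrix (Fin m) (Fin n) ℤ) (Δ : ℤ)
    (hA : ∀ i j, |A i j| ≤ Δ)
    (y : Fin n → ℤ) (hcyc : IsCycle A y) (hne : y ≠ 0)
    (hlong : (2 * (m : ℤ) * Δ + 1) ^ m < ∑ i, |y i|) :
    ∃ u v : Fin n → ℤ, IsCycle A u ∧ IsCycle A v ∧ u ≠ 0 ∧ v ≠ 0 ∧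
      SignCompat u y ∧ SignCompat v y ∧ y = u + v := by
  have hexj : ∃ j, y j ≠ 0 := by
    by_contra h
    push_neg at h
    exact hne (funext fun i => h i)
  obtain ⟨j₀, hj₀⟩ := hexj
  by_cases hAz : ∀ i j, A i j = 0
  -- trivial matrix: split off a single unit
  · have hpow1 : (1:ℤ) ≤ (2 * (m:ℤ) * Δ + 1) ^ m := by
      rcases Nat.eq_zero_or_pos m with hm | hm
      · rw [hm]; norm_num
      · have i₀ : Fin m := ⟨0, hm⟩
        have hΔ0 : (0:ℤ) ≤ Δ := le_trans (abs_nonneg _) (hA i₀ j₀)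
        have h1 : (1:ℤ) ≤ 2 * (m:ℤ) * Δ + 1 := by
          have := mul_nonneg (mul_nonneg (by norm_num : (0:ℤ) ≤ 2) (Int.natCast_nonneg m)) hΔ0
          linarith
        calc (1:ℤ) = 1 ^ m := (one_pow m).symm
          _ ≤ (2 * (m:ℤ) * Δ + 1) ^ m := pow_le_pow_left₀ (by norm_num) h1 m
    have hsum2 : (2:ℤ) ≤ ∑ i, |y i| := by linarith
    set s : ℤ := if 0 < y j₀ then 1 else -1 with hs
    have hsy : 0 < s * y j₀ := by
      rw [hs]; split_ifs with h
      · omega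
      · have : y j₀ < 0 := by omega
        omega
    set u : Fin n → ℤ := Pi.single j₀ s with hu
    refine ⟨u, y - u, ?_, ?_, ?_, ?_, ?_, ?_, by abel⟩
    · funext i
      simp [Matrix.mulVec, dotProduct, hAz]
    · funext i
      simp [Matrix.mulVec, dotProduct, hAz]
    · intro h
      have h2 := congrFun h j₀
      simp only [hu, Pi.single_eq_same, Pi.zero_apply] at h2
      rw [h2] at hsy
      simp at hsy
    · intro h
      have hyu : y = u := by
        have : y - u = 0 := h
        funext i
        have := congrFun this i
        simp only [Pi.sub_apply, Pi.zero_apply] at this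
        omega
      have : ∑ i, |y i| = 1 := by
        rw [hyu, hu]
        rw [Finset.sum_eq_single j₀]
        · simp only [Pi.single_eq_same]
          rw [hs]; split_ifs <;> norm_num
        · intro i _ hi
          rw [Pi.single_eq_of_ne hi, abs_zero]
        · intro h; exact absurd (Finset.mem_univ j₀) h
      omega
    · intro i
      by_cases hij : i = j₀
      · subst hij
        simp only [hu, Pi.single_eq_same]
        exact le_of_lt hsy
      · simp [hu, Pi.single_eq_of_ne hij]
    · intro i
      by_cases hij : i = j₀
      · subst hij
        simp only [Pi.sub_apply, hu, Pi.single_eq_same]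
        rcases (by rw [hs]; split_ifs <;> simp : s = 1 ∨ s = -1) with h | h <;>
          rw [h] at hsy ⊢ <;> nlinarith
      · simp only [Pi.sub_apply, hu, Pi.single_eq_of_ne hij, sub_zero]
        exact mul_self_nonneg _
  -- main case
  · push_neg at hAz
    obtain ⟨i₀, j₁, hij⟩ := hAz
    have hΔ1 : (1:ℤ) ≤ Δ := le_trans (Int.one_le_abs hij) (hA i₀ j₁)
    have hm : 0 < m := i₀.pos
    set N : ℕ := ∑ i, (y i).natAbs with hN
    have hNy : (N : ℤ) = ∑ i, |y i| := by
      rw [hN]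
      push_cast
      exact Finset.sum_congr rfl (fun i _ => rfl)
    have hbig : (2 * (m:ℤ) * Δ + 1) ^ m < (N : ℤ) := by rw [hNy]; exact hlong
    have hpowm : (m:ℤ) + 1 ≤ (2 * (m:ℤ) * Δ + 1) ^ m := by
      have h1 : 2 * (m:ℤ) + 1 ≤ 2 * (m:ℤ) * Δ + 1 := by nlinarith
      have h2 : 2 * (m:ℤ) + 1 ≤ (2 * (m:ℤ) + 1) ^ m :=
        le_self_pow₀ (by omega) (by omega)
      have h3 : (2 * (m:ℤ) + 1) ^ m ≤ (2 * (m:ℤ) * Δ + 1) ^ m :=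
        pow_le_pow_left₀ (by omega) h1 m
      have : (m:ℤ) + 1 ≤ 2 * (m:ℤ) + 1 := by omega
      linarith
    have hNm : m < N := by
      have : (m:ℤ) < N := by linarith
      exact_mod_cast this
    obtain ⟨f, hfsum, hf⟩ := exists_unit_decomp n N y rfl
    -- the step vectors over ℚ
    set v : Fin N → Fin m → ℚ := fun t i => ((A.mulVec (f t)) i : ℚ) with hvdef
    have hstep : ∀ t i, |(A.mulVec (f t)) i| ≤ Δ := by
      intro t i
      obtain ⟨j, s, hs1, hsy, hft⟩ := hf t
      rw [hft, Matrix.mulVec_single]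
      rcases hs1 with h | h <;> rw [h] <;> simp only [Pi.smul_apply, Matrix.col_apply, op_smul_eq_mul, mul_one, mul_neg_one, abs_neg] <;>
        exact hA i j
    have hvbound : ∀ t i, |v t i| ≤ (Δ : ℚ) := by
      intro t i
      have h1 := hstep t i
      have h2 : v t i = (((A.mulVec (f t)) i : ℤ) : ℚ) := rfl
      rw [h2, ← Int.cast_abs]
      exact_mod_cast h1
    have hsumvec : ∑ t, A.mulVec (f t) = 0 := by
      calc ∑ t, A.mulVec (f t) = ∑ t, A.mulVecLin (f t) := by
            simp only [Matrix.mulVecLin_apply]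
        _ = A.mulVecLin (∑ t, f t) := (map_sum A.mulVecLin f Finset.univ).symm
        _ = A.mulVec y := by rw [hfsum, Matrix.mulVecLin_apply]
        _ = 0 := hcyc
    have hsum0 : ∀ i, ∑ t, v t i = 0 := by
      intro i
      have h3 := congrFun hsumvec i
      simp only [Finset.sum_apply, Pi.zero_apply] at h3
      calc ∑ t, v t i = ((∑ t, (A.mulVec (f t)) i : ℤ) : ℚ) := by push_cast; rfl
        _ = 0 := by exact_mod_cast h3
    have hΔq : (0:ℚ) ≤ (Δ:ℚ) := by exact_mod_cast le_trans zero_le_one hΔ1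
    obtain ⟨C, hmono, hcards, hbound⟩ := steinitz_chain m v (Δ:ℚ) hΔq hvbound
      (by rw [Fintype.card_fin]; omega) (by rw [Fintype.card_fin]; omega) hsum0
    -- integer prefix sums
    set p : ℕ → (Fin m → ℤ) := fun k i => ∑ t ∈ C k, (A.mulVec (f t)) i with hp
    have hpbound : ∀ k, k ≤ N → ∀ i, |p k i| ≤ (m:ℤ) * Δ := by
      intro k hk i
      have h := hbound k (by rw [Fintype.card_fin]; exact hk) i
      have hcast : ((p k i : ℤ) : ℚ) = ∑ t ∈ C k, v t i := by
        show ((∑ t ∈ C k, (A.mulVec (f t)) i : ℤ) : ℚ) = ∑ t ∈ C k, v t i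
        push_cast
        rfl
      have h2 : ((|p k i| : ℤ) : ℚ) ≤ (((m:ℤ) * Δ : ℤ) : ℚ) := by
        rw [Int.cast_abs, hcast]
        push_cast
        exact h
      exact_mod_cast h2
    -- pigeonhole in the box
    set box : Finset (Fin m → ℤ) :=
      Finset.Icc (fun _ => -((m:ℤ) * Δ)) (fun _ => (m:ℤ) * Δ) with hbox
    have hmem : ∀ k ∈ Finset.range N, p k ∈ box := by
      intro k hk
      rw [hbox, Finset.mem_Icc]
      constructor <;> intro i <;>
        have := hpbound k (le_of_lt (Finset.mem_range.mp hk)) i <;>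
        rw [abs_le] at this
      · exact this.1
      · exact this.2
    have hboxcard : (box.card : ℤ) = (2 * (m:ℤ) * Δ + 1) ^ m := by
      rw [hbox, Pi.card_Icc]
      have : ∀ i : Fin m, (Finset.Icc (-((m:ℤ) * Δ)) ((m:ℤ) * Δ)).card
          = (2 * (m:ℤ) * Δ + 1).toNat := by
        intro i
        rw [Int.card_Icc]
        congr 1
        ring
      rw [Finset.prod_congr rfl (fun i _ => this i), Finset.prod_const, Finset.card_univ,
        Fintype.card_fin]
      push_cast
      rw [Int.toNat_of_nonneg (by nlinarith : (0:ℤ) ≤ 2 * (m:ℤ) * Δ + 1)]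
    have hcardlt : box.card < (Finset.range N).card := by
      rw [Finset.card_range]
      have : (box.card : ℤ) < (N : ℤ) := by rw [hboxcard]; exact hbig
      exact_mod_cast this
    obtain ⟨k, hk, l, hl, hkl, heq⟩ :=
      Finset.exists_ne_map_eq_of_card_lt_of_maps_to hcardlt hmem
    -- order k < l
    obtain ⟨a, b, ha, hb, hab, heq'⟩ : ∃ a b, a ∈ Finset.range N ∧ b ∈ Finset.range N ∧
        a < b ∧ p a = p b := by
      rcases lt_or_gt_of_ne hkl with h | h
      · exact ⟨k, l, hk, hl, h, heq⟩
      · exact ⟨l, k, hl, hk, h, heq.symm⟩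
    have haN := Finset.mem_range.mp ha
    have hbN := Finset.mem_range.mp hb
    set T : Finset (Fin N) := C b \ C a with hT
    have hsubab : C a ⊆ C b := hmono a b (le_of_lt hab)
    have hcAa : (C a).card = a := hcards a (by rw [Fintype.card_fin]; omega)
    have hcAb : (C b).card = b := hcards b (by rw [Fintype.card_fin]; omega)
    have hcardT : T.card = b - a := by
      rw [hT, Finset.card_sdiff_of_subset hsubab, hcAa, hcAb]
    have hTpos : 0 < T.card := by omega
    have hTlt : T.card < N := by omega
    set u : Fin n → ℤ := ∑ t ∈ T, f t with hu
    have hAu : A.mulVec u = 0 := by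
      rw [hu]
      have : A.mulVec (∑ t ∈ T, f t) = ∑ t ∈ T, A.mulVec (f t) := by
        rw [← Matrix.mulVecLin_apply, map_sum]
        simp only [Matrix.mulVecLin_apply]
      rw [this]
      funext i
      simp only [Finset.sum_apply, Pi.zero_apply]
      rw [hT, Finset.sum_sdiff_eq_sub hsubab]
      have h1 := congrFun heq' i
      simp only [hp] at h1
      omega
    have hAv : A.mulVec (y - u) = 0 := by
      rw [Matrix.mulVec_sub, hAu, hcyc]
      simp
    -- sign pattern vector
    set g : Fin n → ℤ := fun j => if 0 < y j then 1 else -1 with hg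
    have key1 : ∀ t, ∑ j, f t j * g j = 1 := by
      intro t
      obtain ⟨j, s, hs1, hsy, hft⟩ := hf t
      rw [hft, Finset.sum_eq_single j]
      · have hgj : g j = if 0 < y j then 1 else -1 := rfl
        rw [Pi.single_eq_same, hgj]
        rcases hs1 with h | h <;> rw [h] at hsy ⊢ <;> split_ifs with hy <;> omega
      · intro i _ hi
        rw [Pi.single_eq_of_ne hi, zero_mul]
      · intro h; exact absurd (Finset.mem_univ j) h
    have hW : ∀ (S : Finset (Fin N)), ∑ j, (∑ t ∈ S, f t j) * g j = S.card := by
      intro S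
      have : ∀ j, (∑ t ∈ S, f t j) * g j = ∑ t ∈ S, f t j * g j := fun j => by
        rw [Finset.sum_mul]
      rw [Finset.sum_congr rfl (fun j _ => this j), Finset.sum_comm]
      rw [Finset.sum_congr rfl (fun t _ => key1 t)]
      simp
    have hWy : ∑ j, y j * g j = N := by
      have h1 : ∑ j, y j * g j = ∑ j, (∑ t ∈ Finset.univ, f t j) * g j := by
        refine Finset.sum_congr rfl (fun j _ => ?_)
        congr 1
        rw [← hfsum]
        exact Finset.sum_apply _ _ _
      rw [h1, hW Finset.univ, Finset.card_univ, Fintype.card_fin]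
    have hWu : ∑ j, u j * g j = T.card := by
      rw [hu]
      have : ∀ j, (∑ t ∈ T, f t) j = ∑ t ∈ T, f t j := fun j => Finset.sum_apply _ _ _
      rw [Finset.sum_congr rfl (fun j _ => by rw [this j])]
      exact hW T
    have hune : u ≠ 0 := by
      intro h
      rw [h] at hWu
      simp only [Pi.zero_apply, zero_mul, Finset.sum_const_zero] at hWu
      omega
    have hvne : y - u ≠ 0 := by
      intro h
      have hz0 : ∀ j, y j - u j = 0 := by
        intro j
        have := congrFun h j
        simpa using this
      have hz : ∑ j, (y j - u j) * g j = 0 := by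
        rw [Finset.sum_congr rfl (fun j _ => by rw [hz0 j, zero_mul])]
        simp
      rw [Finset.sum_congr rfl (fun j _ => sub_mul (y j) (u j) (g j)),
        Finset.sum_sub_distrib, hWy, hWu] at hz
      omega
    have hterm : ∀ t i, 0 ≤ f t i * y i := by
      intro t i
      obtain ⟨j, s, hs1, hsy, hft⟩ := hf t
      rw [hft]
      by_cases hij : i = j
      · subst hij
        rw [Pi.single_eq_same]
        exact le_of_lt hsy
      · rw [Pi.single_eq_of_ne hij, zero_mul]
    have hscu : SignCompat u y := by
      intro i
      rw [hu]
      have : (∑ t ∈ T, f t) i = ∑ t ∈ T, f t i := Finset.sum_apply _ _ _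
      rw [this, Finset.sum_mul]
      exact Finset.sum_nonneg (fun t _ => hterm t i)
    have hscv : SignCompat (y - u) y := by
      have hyu : y - u = ∑ t ∈ Finset.univ \ T, f t := by
        rw [Finset.sum_sdiff_eq_sub (Finset.subset_univ T), ← hfsum, hu]
      intro i
      rw [hyu]
      have : (∑ t ∈ Finset.univ \ T, f t) i = ∑ t ∈ Finset.univ \ T, f t i :=
        Finset.sum_apply _ _ _
      rw [this, Finset.sum_mul]
      exact Finset.sum_nonneg (fun t _ => hterm t i)
    exact ⟨u, y - u, hAu, hAv, hune, hvne, hscu, hscv, by abel⟩
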